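/- (Gap between decay rate and expansion rate) Suppose f : 𝕋^d → 𝕋^d is a C¹ volume-preserving diffeomorphism and there exist γ > 0 and, for each mean-zero smooth h, a constant C_h with ‖ℒ_fⁿ h‖_{H^{-1}} ≤ C_h e^{-γn} for all n ≥ 1. Then for every mean-zero smooth h ≢ 0, γ ≤ liminf_{n→∞} (1/n) log ‖ℒ_fⁿ h‖_{H¹}. In particular γ ≤ Λ := log sup_x |(Df_x)^{-1}|. -/

import Mathlib

open Filter

/-- Euclidean norm of an integer wavenumber in ℤ^d. -/
noncomputable def znorm {d : ℕ} (k : Fin d → ℤ) : ℝ :=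
  Real.sqrt (∑ i, ((k i : ℝ)) ^ 2)

/-- Homogeneous H¹ energy Σ|k|²|ĥ(k)|². -/
noncomputable def H1sq {d : ℕ} (c : (Fin d → ℤ) → ℂ) : ℝ :=
  ∑' k : Fin d → ℤ, znorm k ^ 2 * ‖c k‖ ^ 2

/-- Homogeneous H⁻¹ energy Σ_{k≠0}|k|⁻²|ĥ(k)|². -/
noncomputable def Hm1sq {d : ℕ} (c : (Fin d → ℤ) → ℂ) : ℝ :=
  ∑' k : Fin d → ℤ, ‖c k‖ ^ 2 / znorm k ^ 2

lemma one_le_znorm {d : ℕ} {k : Fin d → ℤ} (hk : k ≠ 0) : 1 ≤ znorm k := by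
  have : ∃ i, k i ≠ 0 := by
    by_contra h; push_neg at h; exact hk (funext h)
  obtain ⟨i, hi⟩ := this
  have h1 : (1 : ℝ) ≤ ((k i : ℝ)) ^ 2 := by
    have : (1 : ℤ) ≤ (k i) ^ 2 := by
      rcases lt_or_gt_of_ne hi with h | h <;> nlinarith
    exact_mod_cast this
  have h2 : (1 : ℝ) ≤ ∑ j, ((k j : ℝ)) ^ 2 :=
    h1.trans (Finset.single_le_sum (f := fun j => ((k j : ℝ)) ^ 2)
      (fun j _ => sq_nonneg _) (Finset.mem_univ i))
  calc (1 : ℝ) = Real.sqrt 1 := by simp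
    _ ≤ znorm k := Real.sqrt_le_sqrt h2

/-- gap between decay rate and expansion rate: if `c n` are the Fourier
coefficients of ℒ_fⁿ h for a mean-zero smooth h ≢ 0 and a C¹ volume-preserving
diffeomorphism f (so ℒ_f is an L²-isometry with ‖ℒ_f‖_{H¹→H¹} ≤ e^Λ), and
‖ℒ_fⁿ h‖_{H⁻¹} ≤ C_h e^{-γn} for some γ > 0, then
γ ≤ liminf (1/n) log ‖ℒ_fⁿh‖_{H¹}, and in particular γ ≤ Λ. -/
theorem decay_rate_le_expansion_rate {d : ℕ} (Λ γ : ℝ) (hγ : 0 < γ)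
    (c : ℕ → (Fin d → ℤ) → ℂ)
    (hmean : ∀ n, c n 0 = 0)
    (hne : ∃ k, c 0 k ≠ 0)
    (hH1sum : ∀ n, Summable fun k : Fin d → ℤ => znorm k ^ 2 * ‖c n k‖ ^ 2)
    (hiso : ∀ n, (∑' k : Fin d → ℤ, ‖c n k‖ ^ 2) = ∑' k : Fin d → ℤ, ‖c 0 k‖ ^ 2)
    (hH1op : ∀ n, H1sq (c (n + 1)) ≤ Real.exp (2 * Λ) * H1sq (c n))
    (hdecay : ∃ C : ℝ, 0 < C ∧ ∀ n : ℕ, 1 ≤ n →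
      Real.sqrt (Hm1sq (c n)) ≤ C * Real.exp (-γ * n)) :
    γ ≤ Filter.liminf
          (fun n : ℕ => (1 / (n : ℝ)) * Real.log (Real.sqrt (H1sq (c n)))) atTop
      ∧ γ ≤ Λ := by
  obtain ⟨C, hC, hdec⟩ := hdecay
  have hznn : ∀ k : Fin d → ℤ, 0 ≤ znorm k := fun k => Real.sqrt_nonneg _
  -- pointwise bound ‖c n k‖² ≤ |k|²‖c n k‖²
  have hpt : ∀ n k, ‖c n k‖ ^ 2 ≤ znorm k ^ 2 * ‖c n k‖ ^ 2 := by
    intro n k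
    by_cases hk : k = 0
    · simp [hk, hmean n]
    · have hz2 : (1 : ℝ) ≤ znorm k ^ 2 := by nlinarith [one_le_znorm hk]
      nlinarith [sq_nonneg ‖c n k‖]
  have hsumL2 : ∀ n, Summable fun k : Fin d → ℤ => ‖c n k‖ ^ 2 :=
    fun n => (hH1sum n).of_nonneg_of_le (fun k => sq_nonneg _) (hpt n)
  set L := ∑' k : Fin d → ℤ, ‖c 0 k‖ ^ 2 with hLdef
  have hLpos : 0 < L := by
    obtain ⟨k, hk⟩ := hne
    exact Summable.tsum_pos (hsumL2 0) (fun k => sq_nonneg _) k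
      (pow_pos (norm_pos_iff.2 hk) 2)
  -- lower bound on H¹ energy
  have hH1geL : ∀ n, L ≤ H1sq (c n) := by
    intro n
    rw [← hiso n]
    exact Summable.tsum_le_tsum (hpt n) (hsumL2 n) (hH1sum n)
  have hH1pos : ∀ n, 0 < H1sq (c n) := fun n => hLpos.trans_le (hH1geL n)
  -- summability of H⁻¹ energy
  have hptm : ∀ n k, ‖c n k‖ ^ 2 / znorm k ^ 2 ≤ ‖c n k‖ ^ 2 := by
    intro n k
    by_cases hk : k = 0
    · simp [hk, hmean n]
    · have h1 := one_le_znorm hk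
      have hz2 : (1 : ℝ) ≤ znorm k ^ 2 := by nlinarith
      rw [div_le_iff₀ (by nlinarith)]
      nlinarith [sq_nonneg ‖c n k‖]
  have hsumHm1 : ∀ n, Summable fun k : Fin d → ℤ => ‖c n k‖ ^ 2 / znorm k ^ 2 :=
    fun n => (hsumL2 n).of_nonneg_of_le (fun k => by positivity) (hptm n)
  -- interpolation: L ≤ √H1 · √H⁻¹
  have hinterp : ∀ n, L ≤ Real.sqrt (H1sq (c n)) * Real.sqrt (Hm1sq (c n)) := by
    intro n
    rw [← hiso n]
    refine Summable.tsum_le_of_sum_le (hsumL2 n) fun s => ?_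
    have hps : ∀ k : Fin d → ℤ,
        ‖c n k‖ ^ 2 = (znorm k * ‖c n k‖) * (‖c n k‖ / znorm k) := by
      intro k
      by_cases hk : k = 0
      · simp [hk, hmean n]
      · have h1 : znorm k ≠ 0 := by have := one_le_znorm hk; linarith
        field_simp
    calc ∑ k ∈ s, ‖c n k‖ ^ 2
        = ∑ k ∈ s, (znorm k * ‖c n k‖) * (‖c n k‖ / znorm k) := by
          exact Finset.sum_congr rfl fun k _ => hps k
      _ ≤ Real.sqrt (∑ k ∈ s, (znorm k * ‖c n k‖) ^ 2) *
            Real.sqrt (∑ k ∈ s, (‖c n k‖ / znorm k) ^ 2) :=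
          Real.sum_mul_le_sqrt_mul_sqrt _ _ _
      _ ≤ Real.sqrt (H1sq (c n)) * Real.sqrt (Hm1sq (c n)) := by
          have e1 : ∀ k : Fin d → ℤ, (znorm k * ‖c n k‖) ^ 2 = znorm k ^ 2 * ‖c n k‖ ^ 2 :=
            fun k => by ring
          have e2 : ∀ k : Fin d → ℤ, (‖c n k‖ / znorm k) ^ 2 = ‖c n k‖ ^ 2 / znorm k ^ 2 :=
            fun k => by rw [div_pow]
          simp_rw [e1, e2]
          gcongr
          · exact Summable.sum_le_tsum s (fun k _ => by positivity) (hH1sum n)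
          · exact Summable.sum_le_tsum s (fun k _ => by positivity) (hsumHm1 n)
  -- key lower bound
  have hkey : ∀ n : ℕ, 1 ≤ n →
      L * Real.exp (γ * n) ≤ C * Real.sqrt (H1sq (c n)) := by
    intro n hn
    have h1 : L ≤ Real.sqrt (H1sq (c n)) * (C * Real.exp (-γ * n)) := by
      exact (hinterp n).trans
        (mul_le_mul_of_nonneg_left (hdec n hn) (Real.sqrt_nonneg _))
    have h2 := mul_le_mul_of_nonneg_right h1 (Real.exp_nonneg (γ * n))
    calc L * Real.exp (γ * n)
        ≤ Real.sqrt (H1sq (c n)) * (C * Real.exp (-γ * n)) * Real.exp (γ * n) := h2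
      _ = C * Real.sqrt (H1sq (c n)) * Real.exp (-γ * n + γ * n) := by
          rw [Real.exp_add]; ring
      _ = C * Real.sqrt (H1sq (c n)) := by norm_num
  -- logarithmic lower bound
  have hlog : ∀ n : ℕ, 1 ≤ n →
      γ + Real.log (L / C) / n ≤ (1 / (n : ℝ)) * Real.log (Real.sqrt (H1sq (c n))) := by
    intro n hn
    have hnpos : (0 : ℝ) < n := by exact_mod_cast hn
    have hLC : 0 < L / C := div_pos hLpos hC
    have hS : 0 < Real.sqrt (H1sq (c n)) := Real.sqrt_pos.2 (hH1pos n)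
    have h1 : L / C * Real.exp (γ * n) ≤ Real.sqrt (H1sq (c n)) := by
      rw [div_mul_eq_mul_div, div_le_iff₀ hC]
      calc L * Real.exp (γ * n) ≤ C * Real.sqrt (H1sq (c n)) := hkey n hn
        _ = Real.sqrt (H1sq (c n)) * C := by ring
    have h2 := Real.log_le_log (by positivity) h1
    rw [Real.log_mul (ne_of_gt hLC) (Real.exp_ne_zero _), Real.log_exp] at h2
    have h3 : γ + Real.log (L / C) / n = (Real.log (L / C) + γ * n) / n := by
      field_simp; ring
    rw [h3, one_div, inv_mul_eq_div]
    exact (div_le_div_iff_of_pos_right hnpos).mpr h2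
  -- upper bound via expansion
  have hH1up : ∀ n : ℕ, H1sq (c n) ≤ Real.exp (2 * Λ * n) * H1sq (c 0) := by
    intro n
    induction n with
    | zero => simp
    | succ n ih =>
      calc H1sq (c (n + 1)) ≤ Real.exp (2 * Λ) * H1sq (c n) := hH1op n
        _ ≤ Real.exp (2 * Λ) * (Real.exp (2 * Λ * n) * H1sq (c 0)) := by
            exact mul_le_mul_of_nonneg_left ih (Real.exp_nonneg _)
        _ = Real.exp (2 * Λ * ((n + 1 : ℕ) : ℝ)) * H1sq (c 0) := by
            rw [← mul_assoc, ← Real.exp_add]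
            push_cast
            ring_nf
  have hup : ∀ n : ℕ, Real.sqrt (H1sq (c n)) ≤
      Real.exp (Λ * n) * Real.sqrt (H1sq (c 0)) := by
    intro n
    have h2 : Real.sqrt (Real.exp (2 * Λ * n)) = Real.exp (Λ * n) := by
      rw [show 2 * Λ * (n : ℝ) = Λ * n + Λ * n by ring, Real.exp_add,
        Real.sqrt_mul_self (Real.exp_nonneg _)]
    have h1 : Real.sqrt (Real.exp (2 * Λ * n) * H1sq (c 0)) =
        Real.exp (Λ * n) * Real.sqrt (H1sq (c 0)) := by
      rw [Real.sqrt_mul (Real.exp_nonneg _), h2]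
    rw [← h1]
    exact Real.sqrt_le_sqrt (hH1up n)
  -- γ ≤ Λ
  have hγΛ : γ ≤ Λ := by
    by_contra hlt
    push_neg at hlt
    set S := Real.sqrt (H1sq (c 0)) with hSdef
    have hSpos : 0 < S := Real.sqrt_pos.2 (hH1pos 0)
    set M := S * C / L with hMdef
    have hMpos : 0 < M := by positivity
    have hbound : ∀ n : ℕ, 1 ≤ n → Real.exp ((γ - Λ) * n) ≤ M := by
      intro n hn
      have h1 : L * Real.exp (γ * n) ≤ C * (Real.exp (Λ * n) * S) :=
        (hkey n hn).trans (mul_le_mul_of_nonneg_left (hup n) hC.le)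
      have hB : 0 < Real.exp (Λ * n) := Real.exp_pos _
      have e1 : Real.exp ((γ - Λ) * n) * Real.exp (Λ * n) = Real.exp (γ * n) := by
        rw [← Real.exp_add]; ring_nf
      rw [hMdef, le_div_iff₀ hLpos]
      have h4 : Real.exp ((γ - Λ) * n) * L * Real.exp (Λ * n) ≤
          S * C * Real.exp (Λ * n) := by nlinarith
      exact le_of_mul_le_mul_right h4 hB
    obtain ⟨m, hm⟩ := exists_nat_gt (M / (γ - Λ))
    set n := m + 1 with hn
    have hn1 : (1 : ℕ) ≤ n := Nat.le_add_left 1 m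
    have hmn : M / (γ - Λ) < (n : ℝ) := by
      rw [hn]
      push_cast
      calc M / (γ - Λ) < m := hm
        _ ≤ m + 1 := by linarith
    have hgl : 0 < γ - Λ := by linarith
    have h5 : M < (γ - Λ) * n := by
      rw [div_lt_iff₀ hgl] at hmn
      linarith
    have h6 : (γ - Λ) * n + 1 ≤ Real.exp ((γ - Λ) * n) := Real.add_one_le_exp _
    have := hbound n hn1
    linarith
  refine ⟨?_, hγΛ⟩
  -- liminf lower bound
  set u : ℕ → ℝ := fun n => (1 / (n : ℝ)) * Real.log (Real.sqrt (H1sq (c n))) with hudef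
  have hS0 := Real.sqrt_pos.2 (hH1pos 0)
  have hcb : IsCoboundedUnder (· ≥ ·) atTop u := by
    apply isCoboundedUnder_ge_of_eventually_le atTop
      (x := |Λ| + |Real.log (Real.sqrt (H1sq (c 0)))|)
    filter_upwards [eventually_ge_atTop 1] with n hn
    have hnpos : (0 : ℝ) < n := by exact_mod_cast hn
    have hn1 : (1 : ℝ) ≤ n := by exact_mod_cast hn
    have h1 : Real.log (Real.sqrt (H1sq (c n))) ≤
        Λ * n + Real.log (Real.sqrt (H1sq (c 0))) := by
      have := Real.log_le_log (Real.sqrt_pos.2 (hH1pos n)) (hup n)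
      rwa [Real.log_mul (Real.exp_ne_zero _) (ne_of_gt hS0), Real.log_exp] at this
    have h2 : u n ≤ Λ + Real.log (Real.sqrt (H1sq (c 0))) / n := by
      rw [hudef]
      simp only
      rw [one_div, inv_mul_eq_div, div_le_iff₀ hnpos]
      calc Real.log (Real.sqrt (H1sq (c n)))
          ≤ Λ * n + Real.log (Real.sqrt (H1sq (c 0))) := h1
        _ = (Λ + Real.log (Real.sqrt (H1sq (c 0))) / n) * n := by field_simp
    have h3 : Real.log (Real.sqrt (H1sq (c 0))) / n ≤
        |Real.log (Real.sqrt (H1sq (c 0)))| := by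
      rw [div_le_iff₀ hnpos]
      nlinarith [le_abs_self (Real.log (Real.sqrt (H1sq (c 0)))),
        abs_nonneg (Real.log (Real.sqrt (H1sq (c 0))))]
    have := le_abs_self Λ
    linarith
  refine le_of_forall_pos_le_add fun ε hε => ?_
  have hev : ∀ᶠ n in atTop, γ - ε ≤ u n := by
    have htend : Tendsto (fun n : ℕ => Real.log (L / C) / n) atTop (nhds 0) :=
      tendsto_const_div_atTop_nhds_zero_nat _
    have h1 : ∀ᶠ n : ℕ in atTop, |Real.log (L / C) / n| < ε := by
      have := htend.eventually (eventually_abs_sub_lt 0 hε)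
      simpa using this
    filter_upwards [h1, eventually_ge_atTop 1] with n h1n hn
    have h2 := hlog n hn
    have h3 : -ε ≤ Real.log (L / C) / n := by
      have := abs_lt.mp h1n
      linarith [this.1]
    calc γ - ε ≤ γ + Real.log (L / C) / n := by linarith
      _ ≤ u n := h2
  have := le_liminf_of_le hcb hev
  linarith
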